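/- arXiv:1910.08793 — 3 statements merged into one kernel-verified Lean document; each statement's English description precedes it below -/
import Mathlib

section
/- Let T be a normal Suslin tree with rational successors and let S be its lexicographical order. Then S is a linear order which is not separable. -/
noncomputable section

def omega1 : Ordinal.{0} := (Cardinal.aleph 1).ord

/-- A tree presented by a partial order together with a height function `ht` into the
ordinals: heights are strictly monotone, the predecessors of any node form a chain, and
below any node there is a (necessarily unique) predecessor of each smaller height.
These axioms say exactly that the set of strict predecessors of `x` is well-ordered
with order type `ht x`. -/
structure TreeSystem (T : Type*) [PartialOrder T] where
  ht : T → Ordinal.{0}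
  ht_strictMono : ∀ {x y : T}, x < y → ht x < ht y
  pred_chain : ∀ x y z : T, y < x → z < x → y ≤ z ∨ z ≤ y
  pred_exists : ∀ x : T, ∀ o, o < ht x → ∃ z, z < x ∧ ht z = o

variable {T : Type*} [PartialOrder T]

/-- An antichain in the tree sense: pairwise incomparable. -/
def IsTreeAntichain (A : Set T) : Prop :=
  ∀ x ∈ A, ∀ y ∈ A, x ≠ y → ¬ x ≤ y ∧ ¬ y ≤ x

/-- An antichain of the forcing poset `P_T` (whose order is the reverse of the tree
order): pairwise incompatible, i.e. no two distinct members have a common upper bound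
in the tree order. -/
def IsForcingAntichain (A : Set T) : Prop :=
  ∀ p ∈ A, ∀ q ∈ A, p ≠ q → ¬ ∃ r : T, p ≤ r ∧ q ≤ r

def NoUncountableChain (T : Type*) [PartialOrder T] : Prop :=
  ¬ ∃ C : Set T, IsChain (· ≤ ·) C ∧ ¬ C.Countable

def NoUncountableAntichain (T : Type*) [PartialOrder T] : Prop :=
  ¬ ∃ A : Set T, IsTreeAntichain A ∧ ¬ A.Countable

/-- A tree is special if it carries a function to `ω` taking distinct values on
comparable pairs. -/
def SpecialTree (T : Type*) [PartialOrder T] : Prop :=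
  ∃ f : T → ℕ, ∀ x y : T, x < y → f x ≠ f y

namespace TreeSystem

/-- An ω₁-tree: all nodes have height `< ω₁`, all levels are countable, and
the height of the tree is ω₁ (all levels below ω₁ are nonempty). -/
def IsOmegaOneTree (S : TreeSystem T) : Prop :=
  (∀ x : T, S.ht x < omega1) ∧
  (∀ o : Ordinal, {x : T | S.ht x = o}.Countable) ∧
  (∀ o, o < omega1 → ∃ x : T, S.ht x = o)

/-- A Suslin tree: an ω₁-tree with no uncountable chain and no uncountable antichain. -/
def IsSuslin (S : TreeSystem T) : Prop :=
  S.IsOmegaOneTree ∧ NoUncountableChain T ∧ NoUncountableAntichain T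

/-- An Aronszajn tree: an ω₁-tree with no uncountable chain. -/
def IsAronszajn (S : TreeSystem T) : Prop :=
  S.IsOmegaOneTree ∧ NoUncountableChain T

/-- A special ω₁-tree. -/
def IsSpecial (S : TreeSystem T) : Prop :=
  S.IsOmegaOneTree ∧ SpecialTree T

/-- `Δ(x,y)`: the order type of the set `{z : z ≤ x and z ≤ y}` of common lower
bounds, computed as the supremum of `ht z + 1` over that (downward closed) chain. -/
def Delta (S : TreeSystem T) (x y : T) : Ordinal :=
  sSup ((fun z => S.ht z + 1) '' {z : T | z ≤ x ∧ z ≤ y})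

/-- The height of the tree: the least ordinal which is not the height of a node. -/
def height (S : TreeSystem T) : Ordinal :=
  sSup (Set.range fun x : T => S.ht x + 1)

/-- Normality for a tree of height ω₁ (so that every node has nodes of every
larger height `< ω₁` above it and splits): (a) every node has two incomparable nodes
above it; (b) every node has nodes above it at every height `< ω₁`; (c) two nodes of
the same non-successor (i.e. zero or limit) height with the same predecessors
are equal. -/
def IsNormal (S : TreeSystem T) : Prop :=
  (∀ x : T, ∃ y z : T, x < y ∧ x < z ∧ ¬ y ≤ z ∧ ¬ z ≤ y) ∧
  (∀ x : T, ∀ o, S.ht x ≤ o → o < omega1 → ∃ y, x ≤ y ∧ S.ht y = o) ∧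
  (∀ x y : T, S.ht x = S.ht y → (∀ p, S.ht x ≠ p + 1) →
    (∀ z : T, z < x ↔ z < y) → x = y)

/-- Normality for a tree of arbitrary height `S.height`. -/
def IsNormalGen (S : TreeSystem T) : Prop :=
  (∀ x : T, S.ht x + 1 < S.height → ∃ y z : T, x < y ∧ x < z ∧ ¬ y ≤ z ∧ ¬ z ≤ y) ∧
  (∀ x : T, ∀ o, S.ht x ≤ o → o < S.height → ∃ y, x ≤ y ∧ S.ht y = o) ∧
  (∀ x y : T, S.ht x = S.ht y → (∀ p, S.ht x ≠ p + 1) →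
    (∀ z : T, z < x ↔ z < y) → x = y)

/-- The set of immediate successors of `x`. -/
def ImmSucc (S : TreeSystem T) (x : T) : Set T :=
  {y : T | x < y ∧ S.ht y = S.ht x + 1}

/-- `T` has rational successors, as witnessed by the position function `q`: for each
node `x`, `q` is injective on the immediate successors of `x` and induces on them a
linear order isomorphic to the rationals. -/
def RationalSuccessors (S : TreeSystem T) (q : T → ℚ) : Prop :=
  ∀ x : T, Set.InjOn q (S.ImmSucc x) ∧ Nonempty ((q '' S.ImmSucc x) ≃o ℚ)

/-- The lexicographical order on the nodes of a tree with rational successors: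
`a <_S b` iff `a <_T b`, or `a, b` are incomparable and the immediate successor `y`
(of their maximal common predecessor `x`) below `a` precedes the one `z` below `b`
in the rational ordering of the successors of `x`. -/
def LexLt (S : TreeSystem T) (q : T → ℚ) (a b : T) : Prop :=
  a < b ∨ (¬ a ≤ b ∧ ¬ b ≤ a ∧ ∃ x y z : T,
    x < y ∧ x < z ∧ y ≤ a ∧ z ≤ b ∧
    S.ht y = S.ht x + 1 ∧ S.ht z = S.ht x + 1 ∧ q y < q z)

/-- Separability for the lexicographical order. -/
def LexSeparable (S : TreeSystem T) (q : T → ℚ) : Prop :=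
  ∃ D : Set T, D.Countable ∧ ∀ a b : T, S.LexLt q a b →
    (∃ c, S.LexLt q a c ∧ S.LexLt q c b) →
    ∃ d ∈ D, S.LexLt q a d ∧ S.LexLt q d b

/-- The countable chain condition for the lexicographical order: no uncountable family
of pairwise disjoint nonempty open intervals. -/
def LexCCC (S : TreeSystem T) (q : T → ℚ) : Prop :=
  ¬ ∃ I : Set (T × T), ¬ I.Countable ∧
    (∀ p ∈ I, ∃ c, S.LexLt q p.1 c ∧ S.LexLt q c p.2) ∧
    (∀ p ∈ I, ∀ r ∈ I, p ≠ r →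
      ¬ ∃ c, (S.LexLt q p.1 c ∧ S.LexLt q c p.2) ∧
             (S.LexLt q r.1 c ∧ S.LexLt q c r.2))

/-- The tree `T^n` of `n`-tuples of nodes of equal height, ordered coordinatewise
(as a subtype of the pointwise product order). -/
abbrev ProdTree (S : TreeSystem T) (n : ℕ) : Type _ :=
  {f : Fin n → T // ∀ i j : Fin n, S.ht (f i) = S.ht (f j)}

/-- `n`-entangledness of an ω₁-tree: every ω₁-sequence of pairwise disjoint injective
`n`-tuples with `{Δ(a_{ξ,i}, a_{ξ,j}) : i < j < n, ξ < ω₁}` bounded in ω₁ realizes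
every type `g : n → 2`, where `1` means `<_T` and `0` means `¬ <_T`. -/
def Entangled (S : TreeSystem T) (n : ℕ) : Prop :=
  ∀ a : Ordinal → ℕ → T,
    (∀ ξ, ξ < omega1 → ∀ i, i < n → ∀ j, j < n → i ≠ j → a ξ i ≠ a ξ j) →
    (∀ ξ, ξ < omega1 → ∀ δ, δ < omega1 → ξ ≠ δ →
      ∀ i, i < n → ∀ j, j < n → a ξ i ≠ a δ j) →
    (∃ β, β < omega1 ∧ ∀ ξ, ξ < omega1 → ∀ i j : ℕ, i < j → j < n →
      S.Delta (a ξ i) (a ξ j) ≤ β) →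
    ∀ g : ℕ → Bool, ∃ ξ β : Ordinal, ξ < β ∧ β < omega1 ∧
      ∀ i, i < n → (a ξ i < a β i ↔ g i = true)

end TreeSystem

end

namespace TreeSystem

open Ordinal

variable {T : Type*} [PartialOrder T] (S : TreeSystem T)

lemma aux_ht_le_of_le {u v : T} (h : u ≤ v) : S.ht u ≤ S.ht v := by
  rcases h.lt_or_eq with h | h
  · exact (S.ht_strictMono h).le
  · rw [h]

lemma aux_eq_of_le_ht_le {u v : T} (h : u ≤ v) (hh : S.ht v ≤ S.ht u) : u = v := by
  rcases h.lt_or_eq with h | h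
  · exact absurd (S.ht_strictMono h) (not_lt.2 hh)
  · exact h

/-- Two nodes below a common node are comparable according to their heights. -/
lemma aux_le_of_le_le {u v w : T} (hu : u ≤ w) (hv : v ≤ w) (h : S.ht u ≤ S.ht v) : u ≤ v := by
  rcases eq_or_lt_of_le hu with rfl | hu'
  · exact le_of_eq (S.aux_eq_of_le_ht_le hv h).symm
  · rcases eq_or_lt_of_le hv with rfl | hv'
    · exact hu'.le
    · rcases S.pred_chain w u v hu' hv' with h' | h'
      · exact h'
      · exact le_of_eq (S.aux_eq_of_le_ht_le h' h).symm

lemma aux_eq_of_le_le {u v w : T} (hu : u ≤ w) (hv : v ≤ w) (h : S.ht u = S.ht v) : u = v :=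
  le_antisymm (S.aux_le_of_le_le hu hv h.le) (S.aux_le_of_le_le hv hu h.ge)

lemma aux_exists_le_ht (a : T) {o : Ordinal} (h : o ≤ S.ht a) : ∃ y, y ≤ a ∧ S.ht y = o := by
  rcases h.lt_or_eq with h | h
  · obtain ⟨z, hz, hz'⟩ := S.pred_exists a o h
    exact ⟨z, hz.le, hz'⟩
  · exact ⟨a, le_rfl, h.symm⟩

/-- Every two nodes have a common lower bound (the root). -/
lemma aux_root (hnorm : S.IsNormal) (a b : T) : ∃ r : T, r ≤ a ∧ r ≤ b ∧ S.ht r = 0 := by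
  obtain ⟨ra, hra, hra0⟩ := S.aux_exists_le_ht a (zero_le (a := _))
  obtain ⟨rb, hrb, hrb0⟩ := S.aux_exists_le_ht b (zero_le (a := _))
  have : ra = rb := by
    refine hnorm.2.2 ra rb (by rw [hra0, hrb0]) (fun p hp => ?_) (fun z => ?_)
    · rw [hra0] at hp
      exact (Ordinal.succ_ne_zero p) (by rw [← Ordinal.add_one_eq_succ, ← hp])
    · constructor
      · intro hz
        exact absurd (hra0 ▸ S.ht_strictMono hz) (not_lt_of_ge (zero_le (a := _)))
      · intro hz
        exact absurd (hrb0 ▸ S.ht_strictMono hz) (not_lt_of_ge (zero_le (a := _)))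
  exact ⟨ra, hra, this ▸ hrb, hra0⟩

/-- The meet of two incomparable nodes, with its two distinct immediate successors. -/
lemma aux_meet (hnorm : S.IsNormal) {a b : T} (hab : ¬ a ≤ b) (hba : ¬ b ≤ a) :
    ∃ x y z : T, x < y ∧ x < z ∧ y ≤ a ∧ z ≤ b ∧
      S.ht y = S.ht x + 1 ∧ S.ht z = S.ht x + 1 ∧ y ≠ z ∧
      ∀ w : T, w ≤ a → w ≤ b → w ≤ x := by
  set C : Set T := {z : T | z ≤ a ∧ z ≤ b} with hC
  have hlt : ∀ w ∈ C, w < a ∧ w < b := by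
    rintro w ⟨hwa, hwb⟩
    refine ⟨lt_of_le_of_ne hwa ?_, lt_of_le_of_ne hwb ?_⟩
    · rintro rfl; exact hab hwb
    · rintro rfl; exact hba hwa
  set E : Set Ordinal := (fun z => S.ht z + 1) '' C with hE
  have hEne : E.Nonempty := by
    obtain ⟨r, hr1, hr2, _⟩ := S.aux_root hnorm a b
    exact ⟨_, ⟨r, ⟨hr1, hr2⟩, rfl⟩⟩
  have hEbdd : ∀ e ∈ E, e ≤ S.ht a := by
    rintro e ⟨w, hw, rfl⟩
    show S.ht w + 1 ≤ S.ht a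
    rw [Ordinal.add_one_eq_succ, Order.succ_le_iff]
    exact S.ht_strictMono (hlt w hw).1
  have hEbdd' : ∀ e ∈ E, e ≤ S.ht b := by
    rintro e ⟨w, hw, rfl⟩
    show S.ht w + 1 ≤ S.ht b
    rw [Ordinal.add_one_eq_succ, Order.succ_le_iff]
    exact S.ht_strictMono (hlt w hw).2
  have hBdd : BddAbove E := ⟨S.ht a, hEbdd⟩
  set Λ : Ordinal := sSup E with hΛ
  have hΛa : Λ ≤ S.ht a := csSup_le hEne hEbdd
  have hΛb : Λ ≤ S.ht b := csSup_le hEne hEbdd'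
  by_cases hmem : Λ ∈ E
  · -- the sup is attained: its preimage is the meet
    obtain ⟨x, hxC, hxΛ⟩ := hmem
    have hxΛ' : S.ht x + 1 = Λ := hxΛ
    have hmax : ∀ w : T, w ≤ a → w ≤ b → w ≤ x := by
      intro w hwa hwb
      have h1 : S.ht w + 1 ≤ S.ht x + 1 := by
        rw [hxΛ']; exact le_csSup hBdd ⟨w, ⟨hwa, hwb⟩, rfl⟩
      rw [Ordinal.add_one_eq_succ, Ordinal.add_one_eq_succ, Order.succ_le_succ_iff] at h1
      exact S.aux_le_of_le_le hwa hxC.1 h1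
    have hxa : S.ht x + 1 ≤ S.ht a := by rw [hxΛ']; exact hΛa
    have hxb : S.ht x + 1 ≤ S.ht b := by rw [hxΛ']; exact hΛb
    obtain ⟨y, hya, hy⟩ := S.aux_exists_le_ht a hxa
    obtain ⟨z, hzb, hz⟩ := S.aux_exists_le_ht b hxb
    have hxltht : S.ht x < S.ht x + 1 := by
      rw [Ordinal.add_one_eq_succ]; exact Order.lt_succ _
    have hxy : x < y := by
      refine lt_of_le_of_ne (S.aux_le_of_le_le hxC.1 hya (hy ▸ hxltht.le)) ?_
      rintro rfl; exact absurd hy hxltht.ne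
    have hxz : x < z := by
      refine lt_of_le_of_ne (S.aux_le_of_le_le hxC.2 hzb (hz ▸ hxltht.le)) ?_
      rintro rfl; exact absurd hz hxltht.ne
    have hyz : y ≠ z := by
      rintro rfl
      have := hmax y hya hzb
      exact absurd (hy ▸ S.aux_ht_le_of_le this) (not_le.2 hxltht)
    exact ⟨x, y, z, hxy, hxz, hya, hzb, hy, hz, hyz, hmax⟩
  · -- the sup is not attained: contradiction via normality at limit levels
    exfalso
    have hnsucc : ∀ p : Ordinal, Λ ≠ p + 1 := by
      intro p hp
      have hpΛ : p < Λ := by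
        rw [hp, Ordinal.add_one_eq_succ]; exact Order.lt_succ _
      obtain ⟨e, heE, hpe⟩ := exists_lt_of_lt_csSup hEne hpΛ
      obtain ⟨w, hwC, rfl⟩ := heE
      have h1 : S.ht w + 1 ≤ Λ := le_csSup hBdd ⟨w, hwC, rfl⟩
      have h2 : S.ht w ≤ p := by
        rw [hp] at h1
        rw [Ordinal.add_one_eq_succ, Ordinal.add_one_eq_succ, Order.succ_le_succ_iff] at h1
        exact h1
      have hpe' : p < S.ht w + 1 := hpe
      have h3 : p ≤ S.ht w := by
        rw [Ordinal.add_one_eq_succ, Order.lt_succ_iff] at hpe'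
        exact hpe'
      have : Λ = S.ht w + 1 := by rw [hp, le_antisymm h2 h3]
      exact hmem ⟨w, hwC, this.symm⟩
    obtain ⟨u, hua, hu⟩ := S.aux_exists_le_ht a hΛa
    obtain ⟨v, hvb, hv⟩ := S.aux_exists_le_ht b hΛb
    have key : ∀ c u' : T, u' ≤ c → S.ht u' = Λ → (∀ w ∈ C, w ≤ c) →
        ∀ w : T, w < u' → w ∈ C ∧ S.ht w < Λ := by
      intro c u' hu'c hu' hcC w hw
      have hwΛ : S.ht w < Λ := hu' ▸ S.ht_strictMono hw
      obtain ⟨e, heE, hwe⟩ := exists_lt_of_lt_csSup hEne hwΛ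
      obtain ⟨z, hzC, rfl⟩ := heE
      have hwe' : S.ht w < S.ht z + 1 := hwe
      have hwz : S.ht w ≤ S.ht z := by
        rw [Ordinal.add_one_eq_succ, Order.lt_succ_iff] at hwe'; exact hwe'
      have : w ≤ z := S.aux_le_of_le_le (hw.le.trans hu'c) (hcC z hzC) hwz
      exact ⟨⟨this.trans hzC.1, this.trans hzC.2⟩, hwΛ⟩
    have huv : u = v := by
      refine hnorm.2.2 u v (by rw [hu, hv]) (fun p hp => hnsucc p (hu ▸ hp)) (fun w => ?_)
      constructor
      · intro hw
        obtain ⟨hwC, hwΛ⟩ := key a u hua hu (fun z hz => hz.1) w hw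
        refine lt_of_le_of_ne (S.aux_le_of_le_le hwC.2 hvb (by rw [hv]; exact hwΛ.le)) ?_
        rintro rfl; rw [hv] at hwΛ; exact absurd hwΛ (lt_irrefl _)
      · intro hw
        obtain ⟨hwC, hwΛ⟩ := key b v hvb hv (fun z hz => hz.2) w hw
        refine lt_of_le_of_ne (S.aux_le_of_le_le hwC.1 hua (by rw [hu]; exact hwΛ.le)) ?_
        rintro rfl; rw [hu] at hwΛ; exact absurd hwΛ (lt_irrefl _)
    have huC : u ∈ C := ⟨hua, huv ▸ hvb⟩
    have h1 : S.ht u + 1 ≤ Λ := le_csSup hBdd ⟨u, huC, rfl⟩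
    rw [hu, Ordinal.add_one_eq_succ] at h1
    exact lt_irrefl _ (Order.succ_le_iff.mp h1)

end TreeSystem
/-- the lexicographical order of a normal Suslin tree with rational
successors is a linear order (irreflexive, transitive, total) which is not
separable. -/
theorem stmt12 {T : Type*} [PartialOrder T] (S : TreeSystem T)
    (hnorm : S.IsNormal) (hsus : S.IsSuslin) (q : T → ℚ)
    (hq : S.RationalSuccessors q) :
    (∀ a : T, ¬ S.LexLt q a a) ∧
    (∀ a b c : T, S.LexLt q a b → S.LexLt q b c → S.LexLt q a c) ∧
    (∀ a b : T, a ≠ b → S.LexLt q a b ∨ S.LexLt q b a) ∧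
    ¬ S.LexSeparable q := by
  have hirr : ∀ a : T, ¬ S.LexLt q a a := by
    rintro a (h | ⟨h, -⟩)
    · exact lt_irrefl a h
    · exact h le_rfl
  have htrans : ∀ a b c : T, S.LexLt q a b → S.LexLt q b c → S.LexLt q a c := by
    rintro a b c (hab | ⟨hab1, hab2, x1, y1, z1, hx1y1, hx1z1, hy1a, hz1b, hty1, htz1, hq1⟩)
      (hbc | ⟨hbc1, hbc2, x2, y2, z2, hx2y2, hx2z2, hy2b, hz2c, hty2, htz2, hq2⟩)
    · exact Or.inl (hab.trans hbc)
    · -- a < b, b ∥ c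
      have hx2b : x2 ≤ b := hx2y2.le.trans hy2b
      rcases le_or_gt (S.ht a) (S.ht x2) with h | h
      · exact Or.inl (lt_of_le_of_lt (S.aux_le_of_le_le hab.le hx2b h)
          (lt_of_lt_of_le hx2z2 hz2c))
      · have hy2a : y2 ≤ a := by
          refine S.aux_le_of_le_le hy2b hab.le ?_
          rw [hty2, Ordinal.add_one_eq_succ, Order.succ_le_iff]; exact h
        have hac : ¬ a ≤ c := fun h' =>
          absurd (congrArg q (S.aux_eq_of_le_le (hy2a.trans h') hz2c (hty2.trans htz2.symm)))
            hq2.ne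
        have hca : ¬ c ≤ a := fun h' =>
          absurd (congrArg q (S.aux_eq_of_le_le hy2a (hz2c.trans h') (hty2.trans htz2.symm)))
            hq2.ne
        exact Or.inr ⟨hac, hca, x2, y2, z2, hx2y2, hx2z2, hy2a, hz2c, hty2, htz2, hq2⟩
    · -- a ∥ b, b < c
      have hz1c : z1 ≤ c := hz1b.trans hbc.le
      have hac : ¬ a ≤ c := fun h' =>
        absurd (congrArg q (S.aux_eq_of_le_le (hy1a.trans h') hz1c (hty1.trans htz1.symm)))
          hq1.ne
      have hca : ¬ c ≤ a := fun h' => hab2 (hbc.le.trans h')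
      exact Or.inr ⟨hac, hca, x1, y1, z1, hx1y1, hx1z1, hy1a, hz1c, hty1, htz1, hq1⟩
    · -- a ∥ b, b ∥ c
      have hx1b : x1 ≤ b := hx1z1.le.trans hz1b
      have hx2b : x2 ≤ b := hx2y2.le.trans hy2b
      rcases lt_trichotomy (S.ht x1) (S.ht x2) with h | h | h
      · have hz1x2 : z1 ≤ x2 := by
          refine S.aux_le_of_le_le hz1b hx2b ?_
          rw [htz1, Ordinal.add_one_eq_succ, Order.succ_le_iff]; exact h
        have hz1c : z1 ≤ c := hz1x2.trans (hx2z2.le.trans hz2c)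
        have hac : ¬ a ≤ c := fun h' =>
          absurd (congrArg q (S.aux_eq_of_le_le (hy1a.trans h') hz1c (hty1.trans htz1.symm)))
            hq1.ne
        have hca : ¬ c ≤ a := fun h' =>
          absurd (congrArg q (S.aux_eq_of_le_le hy1a (hz1c.trans h') (hty1.trans htz1.symm)))
            hq1.ne
        exact Or.inr ⟨hac, hca, x1, y1, z1, hx1y1, hx1z1, hy1a, hz1c, hty1, htz1, hq1⟩
      · have hx12 : x1 = x2 := S.aux_eq_of_le_le hx1b hx2b h
        have hz1y2 : z1 = y2 := S.aux_eq_of_le_le hz1b hy2b (by rw [htz1, hty2, h])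
        have hqq : q y1 < q z2 := lt_trans hq1 (by rw [hz1y2]; exact hq2)
        have hhts : S.ht y1 = S.ht z2 := by rw [hty1, htz2, h]
        have hac : ¬ a ≤ c := fun h' =>
          absurd (congrArg q (S.aux_eq_of_le_le (hy1a.trans h') hz2c hhts)) hqq.ne
        have hca : ¬ c ≤ a := fun h' =>
          absurd (congrArg q (S.aux_eq_of_le_le hy1a (hz2c.trans h') hhts)) hqq.ne
        exact Or.inr ⟨hac, hca, x1, y1, z2, hx1y1, hx12 ▸ hx2z2, hy1a, hz2c, hty1,
          by rw [htz2, h], hqq⟩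
      · have hy2x1 : y2 ≤ x1 := by
          refine S.aux_le_of_le_le hy2b hx1b ?_
          rw [hty2, Ordinal.add_one_eq_succ, Order.succ_le_iff]; exact h
        have hy2a : y2 ≤ a := hy2x1.trans (hx1y1.le.trans hy1a)
        have hac : ¬ a ≤ c := fun h' =>
          absurd (congrArg q (S.aux_eq_of_le_le (hy2a.trans h') hz2c (hty2.trans htz2.symm)))
            hq2.ne
        have hca : ¬ c ≤ a := fun h' =>
          absurd (congrArg q (S.aux_eq_of_le_le hy2a (hz2c.trans h') (hty2.trans htz2.symm)))
            hq2.ne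
        exact Or.inr ⟨hac, hca, x2, y2, z2, hx2y2, hx2z2, hy2a, hz2c, hty2, htz2, hq2⟩
  have htot : ∀ a b : T, a ≠ b → S.LexLt q a b ∨ S.LexLt q b a := by
    intro a b hne
    by_cases hab : a ≤ b
    · exact Or.inl (Or.inl (lt_of_le_of_ne hab hne))
    by_cases hba : b ≤ a
    · exact Or.inr (Or.inl (lt_of_le_of_ne hba hne.symm))
    obtain ⟨x, y, z, hxy, hxz, hya, hzb, hty, htz, hyz, -⟩ := S.aux_meet hnorm hab hba
    have hqyz : q y ≠ q z := by
      intro h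
      exact hyz ((hq x).1 ⟨hxy, hty⟩ ⟨hxz, htz⟩ h)
    rcases hqyz.lt_or_gt with h | h
    · exact Or.inl (Or.inr ⟨hab, hba, x, y, z, hxy, hxz, hya, hzb, hty, htz, h⟩)
    · exact Or.inr (Or.inr ⟨hba, hab, x, z, y, hxz, hxy, hzb, hya, htz, hty, h⟩)
  refine ⟨hirr, htrans, htot, ?_⟩
  rintro ⟨D, hDc, hsep⟩
  -- a bound on the heights of elements of D
  have homega : Order.IsSuccLimit omega1 := Cardinal.isSuccLimit_ord (Cardinal.aleph0_le_aleph 1)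
  obtain ⟨β, hβ1, hβ2⟩ : ∃ β : Ordinal, β < omega1 ∧ ∀ d ∈ D, S.ht d < β := by
    rcases D.eq_empty_or_nonempty with rfl | hDne
    · exact ⟨0, homega.pos, by simp⟩
    obtain ⟨f, rfl⟩ := hDc.exists_eq_range hDne
    refine ⟨⨆ n : ℕ, S.ht (f n) + 1, ?_, ?_⟩
    · refine Ordinal.iSup_lt_ord ?_ (fun n => ?_)
      · have hcof : omega1.cof = Cardinal.aleph 1 := Cardinal.isRegular_aleph_one.cof_eq
        rw [hcof, Cardinal.mk_nat]
        exact Cardinal.aleph0_lt_aleph_one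
      · rw [Ordinal.add_one_eq_succ]
        exact homega.succ_lt (hsus.1.1 (f n))
    · rintro d ⟨n, rfl⟩
      have hle : S.ht (f n) + 1 ≤ ⨆ n : ℕ, S.ht (f n) + 1 := by
        refine le_ciSup ⟨omega1, ?_⟩ n
        rintro e ⟨m, rfl⟩
        show S.ht (f m) + 1 ≤ omega1
        rw [Ordinal.add_one_eq_succ]
        exact (homega.succ_lt (hsus.1.1 (f m))).le
      calc S.ht (f n) < S.ht (f n) + 1 := by
            rw [Ordinal.add_one_eq_succ]; exact Order.lt_succ _
        _ ≤ _ := hle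
  -- a node at level β
  obtain ⟨x, hx⟩ := hsus.1.2.2 β hβ1
  -- three immediate successors of x in increasing q-order
  obtain ⟨e⟩ := (hq x).2
  have hpick : ∀ r : ℚ, ∃ u ∈ S.ImmSucc x, q u = (e.symm r : ℚ) := by
    intro r
    obtain ⟨u, hu, hu'⟩ := (e.symm r).2
    exact ⟨u, hu, hu'⟩
  obtain ⟨u, hu, hqu⟩ := hpick 0
  obtain ⟨v, hv, hqv⟩ := hpick 1
  obtain ⟨w, hw, hqw⟩ := hpick 2
  have huv : q u < q v := by
    rw [hqu, hqv, Subtype.coe_lt_coe, e.symm.lt_iff_lt]; norm_num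
  have hvw : q v < q w := by
    rw [hqv, hqw, Subtype.coe_lt_coe, e.symm.lt_iff_lt]; norm_num
  -- distinct immediate successors are incomparable
  have hinc : ∀ s t : T, s ∈ S.ImmSucc x → t ∈ S.ImmSucc x → q s < q t →
      ¬ s ≤ t ∧ ¬ t ≤ s := by
    intro s t hs ht hst
    have h1 : S.ht s = S.ht t := by rw [hs.2, ht.2]
    constructor
    · intro h; exact hst.ne (congrArg q (S.aux_eq_of_le_ht_le h h1.ge))
    · intro h; exact hst.ne (congrArg q (S.aux_eq_of_le_ht_le h h1.le)).symm
  have hlex : ∀ s t : T, s ∈ S.ImmSucc x → t ∈ S.ImmSucc x → q s < q t → S.LexLt q s t := by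
    intro s t hs ht hst
    obtain ⟨h1, h2⟩ := hinc s t hs ht hst
    exact Or.inr ⟨h1, h2, x, s, t, hs.1, ht.1, le_rfl, le_rfl, hs.2, ht.2, hst⟩
  -- every element lex-between u and w has height > β
  have hhigh : ∀ t : T, S.LexLt q u t → S.LexLt q t w → β < S.ht t := by
    rintro t (hut | ⟨hut1, hut2, x1, y1, z1, hx1y1, hx1z1, hy1u, hz1t, hty1, htz1, hq1⟩) htw
    · calc β = S.ht x := hx.symm
        _ < S.ht u := S.ht_strictMono hu.1
        _ < S.ht t := S.ht_strictMono hut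
    · rcases htw with htw | ⟨htw1, htw2, x2, y2, z2, hx2y2, hx2z2, hy2t, hz2w, hty2, htz2, hq2⟩
      · -- t < w forces t ≤ x, contradicting ¬ t ≤ u
        exfalso
        have htx : S.ht t ≤ S.ht x := by
          have := S.ht_strictMono htw
          rw [hw.2, hx, Ordinal.add_one_eq_succ, Order.lt_succ_iff, ← hx] at this
          exact this
        exact hut2 ((S.aux_le_of_le_le htw.le hw.1.le htx).trans hu.1.le)
      · rcases hz2w.lt_or_eq with hz2w' | rfl
        · -- the split of t and w is below x; then t lex-precedes u too: contradiction
          exfalso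
          have hz2x : z2 ≤ x := by
            refine S.aux_le_of_le_le hz2w hw.1.le ?_
            have := S.ht_strictMono hz2w'
            rw [hw.2, hx, Ordinal.add_one_eq_succ, Order.lt_succ_iff, ← hx] at this
            exact this
          have htu : S.LexLt q t u :=
            Or.inr ⟨hut2, hut1, x2, y2, z2, hx2y2, hx2z2, hy2t,
              hz2x.trans hu.1.le, hty2, htz2, hq2⟩
          exact hirr u (htrans u t u (Or.inr ⟨hut1, hut2, x1, y1, z1, hx1y1, hx1z1,
            hy1u, hz1t, hty1, htz1, hq1⟩) htu)
        · -- z2 = w: the split is at x itself; y2 ≤ t has height β + 1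
          have hx2 : S.ht x2 = β := by
            have h : S.ht x2 + 1 = β + 1 := by rw [← htz2, hw.2, hx]
            rw [Ordinal.add_one_eq_succ, Ordinal.add_one_eq_succ] at h
            exact le_antisymm (Order.succ_le_succ_iff.mp h.le) (Order.succ_le_succ_iff.mp h.ge)
          calc β < β + 1 := by rw [Ordinal.add_one_eq_succ]; exact Order.lt_succ _
            _ = S.ht y2 := by rw [hty2, hx2]
            _ ≤ S.ht t := S.aux_ht_le_of_le hy2t
  -- apply separability to the interval (u, w), nonempty because of v
  obtain ⟨d, hdD, hd1, hd2⟩ := hsep u w (hlex u w hu hw (huv.trans hvw))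
    ⟨v, hlex u v hu hv huv, hlex v w hv hw hvw⟩
  exact absurd (hhigh d hd1 hd2) (not_lt.2 (hβ2 d hdD).le)
end

section
/- Let T be a normal Suslin tree with rational successors and let S be its lexicographical order. Then S has the countable chain condition; hence S is a Suslin line. -/
section Aux

open Ordinal

variable {T : Type*} [PartialOrder T] (S : TreeSystem T) {q : T → ℚ}

include S in
lemma aux_comp {a x y : T} (hx : x ≤ a) (hy : y ≤ a) : x ≤ y ∨ y ≤ x := by
  rcases hx.lt_or_eq with hx' | rfl
  · rcases hy.lt_or_eq with hy' | rfl
    · exact S.pred_chain a x y hx' hy'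
    · exact Or.inl hx
  · exact Or.inr hy

include S in
lemma aux_ht_mono {x y : T} (h : x ≤ y) : S.ht x ≤ S.ht y := by
  rcases h.lt_or_eq with h' | rfl
  · exact (S.ht_strictMono h').le
  · exact le_rfl

include S in
lemma aux_le_of_ht {x y : T} (h : x ≤ y ∨ y ≤ x) (hht : S.ht x ≤ S.ht y) : x ≤ y := by
  rcases h with h | h
  · exact h
  · rcases h.lt_or_eq with h' | rfl
    · exact absurd hht (not_le.2 (S.ht_strictMono h'))
    · exact le_rfl

lemma aux_eq_of_ht {x y : T} (h : x ≤ y ∨ y ≤ x) (hht : S.ht x = S.ht y) : x = y :=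
  le_antisymm (aux_le_of_ht S h hht.le) (aux_le_of_ht S h.symm hht.ge)

lemma aux_eqsib {w u v : T} (hu : u ∈ S.ImmSucc w) (hv : v ∈ S.ImmSucc w)
    (h : u ≤ v ∨ v ≤ u) : u = v :=
  aux_eq_of_ht S h (hu.2.trans hv.2.symm)

lemma aux_succ_le {x y : T} (h : S.ht x < S.ht y) : S.ht x + 1 ≤ S.ht y := by
  rwa [Ordinal.add_one_eq_succ, Order.succ_le_iff]

/-- key incomparability fact: if `u, m` are distinct siblings, `u ≤ b` and `m ≤ y`,
then `y` and `b` are incomparable. -/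
lemma aux_incomp {w u m b y : T} (hu : u ∈ S.ImmSucc w) (hm : m ∈ S.ImmSucc w)
    (hne : m ≠ u) (hub : u ≤ b) (hmy : m ≤ y) : ¬ y ≤ b ∧ ¬ b ≤ y := by
  constructor
  · intro h
    exact hne (aux_eqsib S hm hu (aux_comp S (hmy.trans h) hub))
  · intro h
    rcases aux_comp S h hmy with hbm | hmb
    · have hb : S.ht b = S.ht m := by
        refine le_antisymm (aux_ht_mono S hbm) ?_
        have h1 : S.ht u ≤ S.ht b := aux_ht_mono S hub
        rw [hu.2] at h1
        rw [hm.2]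
        exact h1
      have hbe : b = m := aux_eq_of_ht S (Or.inl hbm) hb
      exact hne (aux_eqsib S hm hu (Or.inr (hbe ▸ hub)))
    · exact hne (aux_eqsib S hm hu (aux_comp S hmb hub))

lemma aux_mem_image {w u : T} (hu : u ∈ S.ImmSucc w) : q u ∈ q '' S.ImmSucc w :=
  ⟨u, hu, rfl⟩

lemma aux_between (hq : S.RationalSuccessors q) {w u v : T} (hu : u ∈ S.ImmSucc w)
    (hv : v ∈ S.ImmSucc w) (h : q u < q v) :
    ∃ m ∈ S.ImmSucc w, q u < q m ∧ q m < q v := by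
  obtain ⟨-, ⟨e⟩⟩ := hq w
  have hu' : q u ∈ q '' S.ImmSucc w := ⟨u, hu, rfl⟩
  have hv' : q v ∈ q '' S.ImmSucc w := ⟨v, hv, rfl⟩
  have hlt : (⟨q u, hu'⟩ : q '' S.ImmSucc w) < ⟨q v, hv'⟩ := Subtype.mk_lt_mk.2 h
  obtain ⟨r, hr1, hr2⟩ := exists_between (e.lt_iff_lt.2 hlt)
  obtain ⟨m, hm, hqm⟩ := (e.symm r).2
  refine ⟨m, hm, ?_, ?_⟩
  · have h1 : (⟨q u, hu'⟩ : q '' S.ImmSucc w) < e.symm r := by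
      have := e.symm.lt_iff_lt.2 hr1
      rwa [OrderIso.symm_apply_apply] at this
    rw [hqm]
    exact h1
  · have h1 : e.symm r < (⟨q v, hv'⟩ : q '' S.ImmSucc w) := by
      have := e.symm.lt_iff_lt.2 hr2
      rwa [OrderIso.symm_apply_apply] at this
    rw [hqm]
    exact h1

lemma aux_lower (hq : S.RationalSuccessors q) {w u : T} (hu : u ∈ S.ImmSucc w) :
    ∃ m ∈ S.ImmSucc w, q m < q u := by
  obtain ⟨-, ⟨e⟩⟩ := hq w
  have hu' : q u ∈ q '' S.ImmSucc w := ⟨u, hu, rfl⟩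
  have hr1 : e (e.symm (e ⟨q u, hu'⟩ - 1)) < e ⟨q u, hu'⟩ := by
    rw [OrderIso.apply_symm_apply]
    exact sub_one_lt _
  obtain ⟨m, hm, hqm⟩ := (e.symm (e ⟨q u, hu'⟩ - 1)).2
  refine ⟨m, hm, ?_⟩
  rw [hqm]
  exact e.lt_iff_lt.1 hr1

lemma aux_upper (hq : S.RationalSuccessors q) {w u : T} (hu : u ∈ S.ImmSucc w) :
    ∃ m ∈ S.ImmSucc w, q u < q m := by
  obtain ⟨-, ⟨e⟩⟩ := hq w
  have hu' : q u ∈ q '' S.ImmSucc w := ⟨u, hu, rfl⟩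
  have hr1 : e ⟨q u, hu'⟩ < e (e.symm (e ⟨q u, hu'⟩ + 1)) := by
    rw [OrderIso.apply_symm_apply]
    exact lt_add_one _
  obtain ⟨m, hm, hqm⟩ := (e.symm (e ⟨q u, hu'⟩ + 1)).2
  refine ⟨m, hm, ?_⟩
  rw [hqm]
  exact e.lt_iff_lt.1 hr1

lemma aux_sib {w u v : T} (hu : u ∈ S.ImmSucc w) (hv : v ∈ S.ImmSucc w)
    (h : q u < q v) : S.LexLt q u v := by
  have hne : u ≠ v := fun e => absurd h (by rw [e]; exact lt_irrefl _)
  have hinc := aux_incomp S hv hu hne le_rfl le_rfl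
  exact Or.inr ⟨hinc.1, hinc.2, w, u, v, hu.1, hv.1, le_rfl, le_rfl, hu.2, hv.2, h⟩
lemma aux_cone (hq : S.RationalSuccessors q) {a b : T} (h : S.LexLt q a b) :
    ∃ x : T, ∀ y : T, x ≤ y → S.LexLt q a y ∧ S.LexLt q y b := by
  rcases h with h | ⟨hab, hba, w, u, v, hwu, hwv, hua, hvb, htu, htv, huv⟩
  · -- a < b in the tree
    have hh : S.ht a + 1 ≤ S.ht b := aux_succ_le S (S.ht_strictMono h)
    obtain ⟨u, hub, htu⟩ : ∃ u, u ≤ b ∧ S.ht u = S.ht a + 1 := by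
      rcases eq_or_lt_of_le hh with he | hl
      · exact ⟨b, le_rfl, he.symm⟩
      · obtain ⟨z, hz, hz'⟩ := S.pred_exists b _ hl
        exact ⟨z, hz.le, hz'⟩
    have hlt : S.ht a < S.ht u := by
      rw [htu, Ordinal.add_one_eq_succ]
      exact Order.lt_succ _
    have hau : a < u := by
      have hle : a ≤ u := aux_le_of_ht S (aux_comp S h.le hub) hlt.le
      exact hle.lt_of_ne (fun e => absurd (e ▸ hlt) (lt_irrefl _))
    have hu : u ∈ S.ImmSucc a := ⟨hau, htu⟩
    obtain ⟨m, hm, hqm⟩ := aux_lower S hq hu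
    have hne : m ≠ u := fun e => absurd hqm (by rw [e]; exact lt_irrefl _)
    refine ⟨m, fun y hy => ⟨Or.inl (lt_of_lt_of_le hm.1 hy), ?_⟩⟩
    have hinc := aux_incomp S hu hm hne hub hy
    exact Or.inr ⟨hinc.1, hinc.2, a, m, u, hm.1, hau, hy, hub, hm.2, htu, hqm⟩
  · -- a, b incomparable with split triple (w, u, v)
    have hu : u ∈ S.ImmSucc w := ⟨hwu, htu⟩
    have hv : v ∈ S.ImmSucc w := ⟨hwv, htv⟩
    obtain ⟨m, hm, hm1, hm2⟩ := aux_between S hq hu hv huv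
    have hneu : m ≠ u := fun e => absurd hm1 (by rw [e]; exact lt_irrefl _)
    have hnev : m ≠ v := fun e => absurd hm2 (by rw [e]; exact lt_irrefl _)
    refine ⟨m, fun y hy => ⟨?_, ?_⟩⟩
    · have hinc := aux_incomp S hu hm hneu hua hy
      exact Or.inr ⟨hinc.2, hinc.1, w, u, m, hwu, hm.1, hua, hy, htu, hm.2, hm1⟩
    · have hinc := aux_incomp S hv hm hnev hvb hy
      exact Or.inr ⟨hinc.1, hinc.2, w, m, v, hm.1, hwv, hy, hvb, hm.2, htv, hm2⟩

lemma aux_trans {a b c : T} (hab : S.LexLt q a b) (hbc : S.LexLt q b c) :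
    S.LexLt q a c := by
  rcases hab with h | ⟨hnab, hnba, w, u, v, hwu, hwv, hua, hvb, htu, htv, huv⟩
  · rcases hbc with h' | ⟨hnbc, hncb, w, u, v, hwu, hwv, hub, hvc, htu, htv, huv⟩
    · exact Or.inl (h.trans h')
    · -- a < b, and b, c split at w
      have hwb : w < b := hwu.trans_le hub
      rcases aux_comp S h.le hwb.le with haw | hwa
      · exact Or.inl (lt_of_le_of_lt haw (hwv.trans_le hvc))
      · rcases hwa.lt_or_eq with hwa' | heq
        · have hua' : u ≤ a :=
            aux_le_of_ht S (aux_comp S hub h.le) (htu ▸ aux_succ_le S (S.ht_strictMono hwa'))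
          refine Or.inr ⟨?_, ?_, w, u, v, hwu, hwv, hua', hvc, htu, htv, huv⟩
          · intro h'
            have := aux_eqsib S ⟨hwu, htu⟩ ⟨hwv, htv⟩ (aux_comp S (hua'.trans h') hvc)
            rw [this] at huv; exact absurd huv (lt_irrefl _)
          · intro h'
            exact hncb (h'.trans h.le)
        · exact Or.inl (lt_of_le_of_lt heq.ge (hwv.trans_le hvc))
  · rcases hbc with h' | ⟨hnbc, hncb, w', u', v', hwu', hwv', hub', hvc', htu', htv', huv'⟩
    · -- a, b split at w; b < c
      refine Or.inr ⟨?_, ?_, w, u, v, hwu, hwv, hua, hvb.trans h'.le, htu, htv, huv⟩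
      · intro h2
        have := aux_eqsib S ⟨hwu, htu⟩ ⟨hwv, htv⟩
          (aux_comp S (hua.trans h2) (hvb.trans h'.le))
        rw [this] at huv; exact absurd huv (lt_irrefl _)
      · intro h2
        exact hnba (h'.le.trans h2)
    · -- both splits
      have hwb : w < b := hwv.trans_le hvb
      have hw'b : w' < b := hwu'.trans_le hub'
      rcases lt_trichotomy (S.ht w) (S.ht w') with h1 | h1 | h1
      · -- split of (a,b) is lower
        have hvu' : v ≤ u' := aux_le_of_ht S (aux_comp S hvb hub')
            (by rw [htv, htu']; exact add_le_add_left h1.le 1)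
        have hvw' : v ≤ w' := aux_le_of_ht S (aux_comp S hvu' hwu'.le)
            (htv ▸ aux_succ_le S h1)
        have hvc : v ≤ c := (hvw'.trans hwv'.le).trans hvc'
        refine Or.inr ⟨?_, ?_, w, u, v, hwu, hwv, hua, hvc, htu, htv, huv⟩
        · intro h2
          have := aux_eqsib S ⟨hwu, htu⟩ ⟨hwv, htv⟩ (aux_comp S (hua.trans h2) hvc)
          rw [this] at huv; exact absurd huv (lt_irrefl _)
        · intro h2
          have hw'a : w' < a := hwv'.trans_le (hvc'.trans h2)
          have huw' : u ≤ w' := aux_le_of_ht S (aux_comp S hua hw'a.le)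
              (htu ▸ aux_succ_le S h1)
          have := aux_eqsib S ⟨hwu, htu⟩ ⟨hwv, htv⟩ (aux_comp S huw' hvw')
          rw [this] at huv; exact absurd huv (lt_irrefl _)
      · -- equal splits
        have hww' : w = w' := aux_eq_of_ht S (S.pred_chain b w w' hwb hw'b) h1
        subst hww'
        have hvu' : v = u' := aux_eqsib S ⟨hwv, htv⟩ ⟨hwu', htu'⟩ (aux_comp S hvb hub')
        have h3 : q v < q v' := by rw [hvu']; exact huv'
        have hqq : q u < q v' := huv.trans h3
        refine Or.inr ⟨?_, ?_, w, u, v', hwu, hwv', hua, hvc', htu, htv', hqq⟩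
        · intro h2
          have := aux_eqsib S ⟨hwu, htu⟩ ⟨hwv', htv'⟩ (aux_comp S (hua.trans h2) hvc')
          rw [this] at hqq; exact absurd hqq (lt_irrefl _)
        · intro h2
          have := aux_eqsib S ⟨hwu, htu⟩ ⟨hwv', htv'⟩ (aux_comp S hua (hvc'.trans h2))
          rw [this] at hqq; exact absurd hqq (lt_irrefl _)
      · -- split of (b,c) is lower
        have hu'v : u' ≤ v := aux_le_of_ht S (aux_comp S hub' hvb)
            (by rw [htu', htv]; exact add_le_add_left h1.le 1)
        have hu'w : u' ≤ w := aux_le_of_ht S (aux_comp S hu'v hwv.le)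
            (htu' ▸ aux_succ_le S h1)
        have hu'a : u' ≤ a := (hu'w.trans hwu.le).trans hua
        refine Or.inr ⟨?_, ?_, w', u', v', hwu', hwv', hu'a, hvc', htu', htv', huv'⟩
        · intro h2
          have := aux_eqsib S ⟨hwu', htu'⟩ ⟨hwv', htv'⟩ (aux_comp S (hu'a.trans h2) hvc')
          rw [this] at huv'; exact absurd huv' (lt_irrefl _)
        · intro h2
          have := aux_eqsib S ⟨hwu', htu'⟩ ⟨hwv', htv'⟩ (aux_comp S hu'a (hvc'.trans h2))
          rw [this] at huv'; exact absurd huv' (lt_irrefl _)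
/-- Core claim for non-separability: any point lexicographically between two
siblings above `x` must lie above `x`. -/
lemma aux_core {x y₁ y₃ d : T} (hy₁ : y₁ ∈ S.ImmSucc x) (hy₃ : y₃ ∈ S.ImmSucc x)
    (h₁ : S.LexLt q y₁ d) (h₂ : S.LexLt q d y₃) : x ≤ d := by
  rcases h₁ with h₁ | ⟨hn1, hn2, w, u, v, hwu, hwv, hu1, hvd, htu, htv, hquv⟩
  · exact (hy₁.1.trans h₁).le
  · rcases h₂ with h₂ | ⟨hn1', hn2', w', u', v', hwu', hwv', hud', hv3', htu', htv', hq'⟩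
    · -- d < y₃ in the tree
      rcases S.pred_chain y₃ d x h₂ hy₃.1 with hdx | hxd
      · exact absurd (hdx.trans hy₁.1.le) hn2
      · exact hxd
    · by_contra hxd
      have hwy₁ : w < y₁ := hwu.trans_le hu1
      have hwht : S.ht w ≤ S.ht x := by
        have h3 : S.ht u ≤ S.ht y₁ := aux_ht_mono S hu1
        rw [htu, hy₁.2, Ordinal.add_one_eq_succ, Ordinal.add_one_eq_succ,
          Order.succ_le_succ_iff] at h3
        exact h3
      have hwx : w ≤ x := aux_le_of_ht S (S.pred_chain y₁ w x hwy₁ hy₁.1) hwht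
      rcases hwx.lt_or_eq with hwx' | heq
      swap
      · exact hxd (heq.ge.trans (hwv.le.trans hvd))
      have hux : u ≤ x := aux_le_of_ht S (aux_comp S hu1 hy₁.1.le)
        (htu ▸ aux_succ_le S (S.ht_strictMono hwx'))
      have hw'y₃ : w' < y₃ := hwv'.trans_le hv3'
      have hw'ht : S.ht w' ≤ S.ht x := by
        have h3 : S.ht v' ≤ S.ht y₃ := aux_ht_mono S hv3'
        rw [htv', hy₃.2, Ordinal.add_one_eq_succ, Ordinal.add_one_eq_succ,
          Order.succ_le_succ_iff] at h3
        exact h3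
      have hw'x : w' ≤ x := aux_le_of_ht S (S.pred_chain y₃ w' x hw'y₃ hy₃.1) hw'ht
      rcases hw'x.lt_or_eq with hw'x' | heq'
      swap
      · exact hxd (heq'.ge.trans (hwu'.le.trans hud'))
      have hv'x : v' ≤ x := aux_le_of_ht S (aux_comp S hv3' hy₃.1.le)
        (htv' ▸ aux_succ_le S (S.ht_strictMono hw'x'))
      rcases lt_trichotomy (S.ht w) (S.ht w') with h1 | h1 | h1
      · have hvu' : v ≤ u' := aux_le_of_ht S (aux_comp S hvd hud')
          (by rw [htv, htu']; exact add_le_add_left h1.le 1)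
        have hvw' : v ≤ w' := aux_le_of_ht S (aux_comp S hvu' hwu'.le)
          (htv ▸ aux_succ_le S h1)
        have huw' : u ≤ w' := aux_le_of_ht S (aux_comp S hux hw'x'.le)
          (htu ▸ aux_succ_le S h1)
        have := aux_eqsib S ⟨hwu, htu⟩ ⟨hwv, htv⟩ (aux_comp S huw' hvw')
        rw [this] at hquv; exact absurd hquv (lt_irrefl _)
      · have hww' : w = w' := aux_eq_of_ht S (S.pred_chain x w w' hwx' hw'x') h1
        subst hww'
        have h4 : u = v' := aux_eqsib S ⟨hwu, htu⟩ ⟨hwv', htv'⟩ (aux_comp S hux hv'x)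
        have h5 : v = u' := aux_eqsib S ⟨hwv, htv⟩ ⟨hwu', htu'⟩ (aux_comp S hvd hud')
        rw [h4, h5] at hquv
        exact absurd (hquv.trans hq') (lt_irrefl _)
      · have hu'v : u' ≤ v := aux_le_of_ht S (aux_comp S hud' hvd)
          (by rw [htu', htv]; exact add_le_add_left h1.le 1)
        have hu'w : u' ≤ w := aux_le_of_ht S (aux_comp S hu'v hwv.le)
          (htu' ▸ aux_succ_le S h1)
        have hv'w : v' ≤ w := aux_le_of_ht S (aux_comp S hv'x hwx'.le)
          (htv' ▸ aux_succ_le S h1)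
        have := aux_eqsib S ⟨hwu', htu'⟩ ⟨hwv', htv'⟩ (aux_comp S hu'w hv'w)
        rw [this] at hq'; exact absurd hq' (lt_irrefl _)
end Aux

/-- the lexicographical order of a normal Suslin tree with rational
successors has the countable chain condition; hence it is a Suslin line (c.c.c. and
not separable). -/
theorem stmt13 {T : Type*} [PartialOrder T] (S : TreeSystem T)
    (hnorm : S.IsNormal) (hsus : S.IsSuslin) (q : T → ℚ)
    (hq : S.RationalSuccessors q) :
    S.LexCCC q ∧ ¬ S.LexSeparable q := by
  have hlim : Order.IsSuccLimit omega1 := Cardinal.isSuccLimit_ord (Cardinal.aleph0_le_aleph 1)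
  constructor
  · rintro ⟨I, hIc, hne, hdisj⟩
    have hx : ∀ p : T × T, ∃ x : T,
        p ∈ I → ∀ y, x ≤ y → S.LexLt q p.1 y ∧ S.LexLt q y p.2 := by
      intro p
      by_cases hp : p ∈ I
      · obtain ⟨c, hc1, hc2⟩ := hne p hp
        obtain ⟨x, hx⟩ := aux_cone S hq (aux_trans S hc1 hc2)
        exact ⟨x, fun _ => hx⟩
      · obtain ⟨t₀, -⟩ := hsus.1.2.2 0 hlim.pos
        exact ⟨t₀, fun h => absurd h hp⟩
    choose f hf using hx
    have key : ∀ p ∈ I, ∀ r ∈ I, p ≠ r → ¬ f p ≤ f r := by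
      intro p hp r hr hpr hle
      exact hdisj p hp r hr hpr ⟨f r, hf p hp (f r) hle, hf r hr (f r) le_rfl⟩
    have hinj : Set.InjOn f I := by
      intro p hp r hr hfe
      by_contra hpr
      exact key p hp r hr hpr (le_of_eq hfe)
    refine hsus.2.2 ⟨f '' I, ?_, ?_⟩
    · rintro a ⟨p, hp, rfl⟩ b ⟨r, hr, rfl⟩ hab
      have hpr : p ≠ r := fun e => hab (by rw [e])
      exact ⟨key p hp r hr hpr, key r hr p hp hpr.symm⟩
    · intro hAc
      exact hIc (Set.countable_of_injective_of_countable_image hinj hAc)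
  · rintro ⟨D, hD, hdense⟩
    obtain ⟨β, hβ, hβD⟩ : ∃ β, β < omega1 ∧ ∀ d ∈ D, S.ht d < β := by
      rcases D.eq_empty_or_nonempty with rfl | hDne
      · exact ⟨0, hlim.pos, fun d hd => absurd hd (Set.notMem_empty d)⟩
      · obtain ⟨g, rfl⟩ := hD.exists_eq_range hDne
        refine ⟨iSup (fun n => S.ht (g n) + 1), ?_, ?_⟩
        · apply Ordinal.iSup_lt_ord_lift
          · have hco : omega1.cof = Cardinal.aleph 1 := Cardinal.isRegular_aleph_one.cof_eq
            rw [Cardinal.mk_nat, Cardinal.lift_aleph0, hco]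
            exact Cardinal.aleph0_lt_aleph_one
          · intro n
            rw [Ordinal.add_one_eq_succ]
            exact hlim.succ_lt (hsus.1.1 (g n))
        · rintro d ⟨n, rfl⟩
          calc S.ht (g n) < S.ht (g n) + 1 := by
                rw [Ordinal.add_one_eq_succ]; exact Order.lt_succ _
            _ ≤ _ := le_ciSup (Ordinal.bddAbove_range _) n
    obtain ⟨x, hx⟩ := hsus.1.2.2 β hβ
    obtain ⟨y₂, hxy₂, hy₂⟩ := hnorm.2.1 x (S.ht x + 1)
      (by rw [Ordinal.add_one_eq_succ]; exact Order.le_succ _)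
      (by rw [Ordinal.add_one_eq_succ]; exact hlim.succ_lt (hsus.1.1 x))
    have hlt : S.ht x < S.ht y₂ := by
      rw [hy₂, Ordinal.add_one_eq_succ]; exact Order.lt_succ _
    have hxy₂' : x < y₂ := hxy₂.lt_of_ne (by rintro rfl; exact absurd hlt (lt_irrefl _))
    have hy₂m : y₂ ∈ S.ImmSucc x := ⟨hxy₂', hy₂⟩
    obtain ⟨y₁, hy₁m, hq12⟩ := aux_lower S hq hy₂m
    obtain ⟨y₃, hy₃m, hq23⟩ := aux_upper S hq hy₂m
    obtain ⟨d, hdD, hd1, hd3⟩ := hdense y₁ y₃ (aux_sib S hy₁m hy₃m (hq12.trans hq23))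
      ⟨y₂, aux_sib S hy₁m hy₂m hq12, aux_sib S hy₂m hy₃m hq23⟩
    have hled : x ≤ d := aux_core S hy₁m hy₃m hd1 hd3
    have h4 : S.ht x ≤ S.ht d := aux_ht_mono S hled
    rw [hx] at h4
    exact absurd (hβD d hdD) (not_lt.2 h4)
end

section
/- In any Suslin tree T there is a sequence of triples ⟨(x_i, y_i, z_i) : i < ω₁⟩ with x_i <_T y_i, x_i <_T z_i, y_i and z_i incomparable, and ht(y_i), ht(z_i) < ht(x_j) for i < j; and for any such sequence, the sequence of pairs ⟨(y_ξ, z_ξ) : ξ < ω₁⟩ does not realize the type (1,1), i.e., there do not exist ξ < β with y_ξ <_T y_β and z_ξ <_T z_β. -/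
-- auxiliary lemmas, to be inserted before stmt17
lemma omega1_isLimit : Order.IsSuccLimit omega1 :=
  Cardinal.isSuccLimit_ord (Cardinal.aleph0_le_aleph 1)

lemma lt_omega1_iff {o : Ordinal} : o < omega1 ↔ o.card < Cardinal.aleph 1 :=
  Cardinal.lt_ord

lemma countable_Iio_of_lt_omega1 {o : Ordinal.{0}} (ho : o < omega1) :
    (Set.Iio o).Countable := by
  rw [Cardinal.countable_iff_lt_aleph_one, Ordinal.mk_Iio_ordinal, Cardinal.lift_lt_aleph_one]
  exact lt_omega1_iff.mp ho

lemma not_countable_Iio_omega1 : ¬ (Set.Iio omega1).Countable := by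
  rw [Cardinal.countable_iff_lt_aleph_one, Ordinal.mk_Iio_ordinal, Cardinal.lift_lt_aleph_one]
  have : omega1.card = Cardinal.aleph 1 := Cardinal.card_ord _
  rw [this]
  exact lt_irrefl _

lemma TreeSystem.ht_mono {T : Type*} [PartialOrder T] (S : TreeSystem T) {x y : T}
    (h : x ≤ y) : S.ht x ≤ S.ht y := by
  rcases eq_or_lt_of_le h with rfl | h'
  · exact le_rfl
  · exact (S.ht_strictMono h').le

/-- In a Suslin tree there are splitting nodes of arbitrarily large height below ω₁. -/
lemma TreeSystem.exists_split {T : Type*} [PartialOrder T] (S : TreeSystem T)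
    (h : S.IsSuslin) (α : Ordinal) (hα : α < omega1) :
    ∃ x y z : T, α ≤ S.ht x ∧ x < y ∧ x < z ∧ ¬ y ≤ z ∧ ¬ z ≤ y := by
  obtain ⟨⟨hlt, hlev, hex⟩, hch, _⟩ := h
  by_contra hc
  push_neg at hc
  have H : ∀ x : T, α ≤ S.ht x → ∀ y z : T, x < y → x < z → y ≤ z ∨ z ≤ y := by
    intro x hx y z hy hz
    by_cases hyz : y ≤ z
    · exact Or.inl hyz
    · exact Or.inr (hc x y z hx hy hz hyz)
  set W : Set T := {w | α ≤ S.ht w} with hW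
  have exP : ∀ w : T, ∃ p : T, α ≤ S.ht w → (p ≤ w ∧ S.ht p = α) := by
    intro w
    by_cases hw : α ≤ S.ht w
    · rcases eq_or_lt_of_le hw with he | hlt'
      · exact ⟨w, fun _ => ⟨le_refl w, he.symm⟩⟩
      · obtain ⟨p, hp, hpe⟩ := S.pred_exists w α hlt'
        exact ⟨p, fun _ => ⟨hp.le, hpe⟩⟩
    · exact ⟨w, fun hw' => absurd hw' hw⟩
  choose P hP using exP
  have hWnc : ¬ W.Countable := by
    intro hWc
    have h1 : (S.ht '' W).Countable := hWc.image _
    have h2 : Set.Ico α omega1 ⊆ S.ht '' W := by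
      rintro o ⟨ho1, ho2⟩
      obtain ⟨w, hw⟩ := hex o ho2
      exact ⟨w, by simp [hW, hw, ho1], hw⟩
    have h3 : (Set.Iio omega1).Countable := by
      have hsub : Set.Iio omega1 ⊆ Set.Iio α ∪ Set.Ico α omega1 := by
        intro o ho
        by_cases h' : o < α
        · exact Or.inl h'
        · exact Or.inr ⟨le_of_not_gt h', ho⟩
      exact Set.Countable.mono hsub
        ((countable_Iio_of_lt_omega1 hα).union (h1.mono h2))
    exact not_countable_Iio_omega1 h3
  have hcov : W ⊆ ⋃ p ∈ {p : T | S.ht p = α}, {w ∈ W | P w = p} := by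
    intro w hw
    exact Set.mem_biUnion (hP w hw).2 ⟨hw, rfl⟩
  have hnot : ¬ ∀ p ∈ {p : T | S.ht p = α}, ({w ∈ W | P w = p}).Countable := by
    intro hall
    exact hWnc (Set.Countable.mono hcov ((hlev α).biUnion hall))
  push_neg at hnot
  obtain ⟨p, hpα, hFnc⟩ := hnot
  have hpα' : S.ht p = α := hpα
  have hchain : IsChain (· ≤ ·) {w ∈ W | P w = p} := by
    rintro w₁ ⟨hw₁, he₁⟩ w₂ ⟨hw₂, he₂⟩ _
    have h₁ := hP w₁ hw₁
    have h₂ := hP w₂ hw₂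
    rw [he₁] at h₁
    rw [he₂] at h₂
    rcases eq_or_lt_of_le h₁.1 with he | hlt₁
    · exact Or.inl (he ▸ h₂.1)
    rcases eq_or_lt_of_le h₂.1 with he | hlt₂
    · exact Or.inr (he ▸ h₁.1)
    exact H p hpα'.ge w₁ w₂ hlt₁ hlt₂
  exact hch ⟨_, hchain, hFnc⟩


/-- in any Suslin tree there is an ω₁-sequence of triples
`(x_i, y_i, z_i)` with `x_i < y_i`, `x_i < z_i`, `y_i` and `z_i` incomparable, and
`ht y_i, ht z_i < ht x_j` for `i < j`; and for any such sequence, the sequence of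
pairs `(y_ξ, z_ξ)` does not realize the type `(1,1)`. -/
theorem stmt17 {T : Type*} [PartialOrder T] (S : TreeSystem T) (h : S.IsSuslin) :
    (∃ x y z : Ordinal → T,
      (∀ i, i < omega1 → x i < y i ∧ x i < z i ∧ ¬ y i ≤ z i ∧ ¬ z i ≤ y i) ∧
      (∀ i j : Ordinal, i < j → j < omega1 →
        S.ht (y i) < S.ht (x j) ∧ S.ht (z i) < S.ht (x j))) ∧
    (∀ x y z : Ordinal → T,
      (∀ i, i < omega1 → x i < y i ∧ x i < z i ∧ ¬ y i ≤ z i ∧ ¬ z i ≤ y i) →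
      (∀ i j : Ordinal, i < j → j < omega1 →
        S.ht (y i) < S.ht (x j) ∧ S.ht (z i) < S.ht (x j)) →
      ¬ ∃ ξ β : Ordinal, ξ < β ∧ β < omega1 ∧ y ξ < y β ∧ z ξ < z β) := by
  constructor
  · -- existence of the sequence of triples
    have hlt : ∀ w : T, S.ht w < omega1 := h.1.1
    have pickEx : ∀ α : Ordinal, ∃ t : T × T × T,
        (α < omega1 → α ≤ S.ht t.1) ∧ t.1 < t.2.1 ∧ t.1 < t.2.2 ∧
          ¬ t.2.1 ≤ t.2.2 ∧ ¬ t.2.2 ≤ t.2.1 := by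
      intro α
      by_cases hα : α < omega1
      · obtain ⟨x, y, z, h1, h2, h3, h4, h5⟩ := S.exists_split h α hα
        exact ⟨(x, y, z), fun _ => h1, h2, h3, h4, h5⟩
      · obtain ⟨x, y, z, _, h2, h3, h4, h5⟩ := S.exists_split h 0 omega1_isLimit.pos
        exact ⟨(x, y, z), fun h' => absurd h' hα, h2, h3, h4, h5⟩
    choose pick hpick using pickEx
    set gb : T × T × T → Ordinal := fun t => (S.ht t.2.1 ⊔ S.ht t.2.2) + 1 with hgb
    let f : Ordinal → T × T × T :=
      Ordinal.lt_wf.fix fun i rec => pick (Ordinal.bsup i fun j hj => gb (rec j hj))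
    have hfeq : ∀ i, f i = pick (Ordinal.bsup i fun j _ => gb (f j)) := fun i =>
      Ordinal.lt_wf.fix_eq _ i
    set B : Ordinal → Ordinal := fun i => Ordinal.bsup i fun j _ => gb (f j) with hBdef
    have hgb_lt : ∀ t : T × T × T, gb t < omega1 := by
      intro t
      have h1 : S.ht t.2.1 ⊔ S.ht t.2.2 < omega1 := sup_lt_iff.mpr ⟨hlt _, hlt _⟩
      rw [hgb]
      simpa only [Ordinal.add_one_eq_succ] using omega1_isLimit.succ_lt h1
    have key : ∀ i, (B i < omega1 → B i ≤ S.ht (f i).1) ∧ (f i).1 < (f i).2.1 ∧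
        (f i).1 < (f i).2.2 ∧ ¬ (f i).2.1 ≤ (f i).2.2 ∧ ¬ (f i).2.2 ≤ (f i).2.1 := by
      intro i
      rw [hfeq i]
      exact hpick _
    have hB_lt : ∀ i, i < omega1 → B i < omega1 := by
      intro i hi
      exact Cardinal.bsup_lt_ord_of_isRegular Cardinal.isRegular_aleph_one
        (lt_omega1_iff.mp hi) fun j _ => hgb_lt _
    refine ⟨fun i => (f i).1, fun i => (f i).2.1, fun i => (f i).2.2, ?_, ?_⟩
    · intro i _
      exact (key i).2
    · intro i j hij hj
      have h1 : gb (f i) ≤ B j := Ordinal.le_bsup _ i hij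
      have h2 : B j ≤ S.ht (f j).1 := (key j).1 (hB_lt j hj)
      have h3 : S.ht (f i).2.1 ⊔ S.ht (f i).2.2 < gb (f i) := by
        rw [hgb]
        simpa only [Ordinal.add_one_eq_succ] using Order.lt_succ _
      constructor
      · exact lt_of_lt_of_le (lt_of_le_of_lt le_sup_left h3) (h1.trans h2)
      · exact lt_of_lt_of_le (lt_of_le_of_lt le_sup_right h3) (h1.trans h2)
  · -- no such sequence realizes the type (1,1)
    rintro x y z hs ho ⟨ξ, β, hξβ, hβ, hyy, hzz⟩
    have hξ : ξ < omega1 := hξβ.trans hβ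
    obtain ⟨hxyβ, hxzβ, _, _⟩ := hs β hβ
    obtain ⟨_, _, hinc1, hinc2⟩ := hs ξ hξ
    obtain ⟨hhy, hhz⟩ := ho ξ β hξβ hβ
    -- y ξ < x β
    have h1 : y ξ < x β := by
      rcases S.pred_chain (y β) (y ξ) (x β) hyy hxyβ with hle | hle
      · exact lt_of_le_of_ne hle fun he => absurd (he ▸ hhy) (lt_irrefl _)
      · exact absurd (lt_of_le_of_lt (S.ht_mono hle) hhy) (lt_irrefl _)
    have h2 : z ξ < x β := by
      rcases S.pred_chain (z β) (z ξ) (x β) hzz hxzβ with hle | hle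
      · exact lt_of_le_of_ne hle fun he => absurd (he ▸ hhz) (lt_irrefl _)
      · exact absurd (lt_of_le_of_lt (S.ht_mono hle) hhz) (lt_irrefl _)
    rcases S.pred_chain (x β) (y ξ) (z ξ) h1 h2 with hle | hle
    · exact hinc1 hle
    · exact hinc2 hle
end
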